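/- Let p be a prime, k ≥ 1 an integer, α, β ∈ ℤ_p (p-adic integers), and γ ∈ {0,1,2,…} such that, in ℤ_p: k(β−α) + 1 ≡ 0 (mod p^{2γ+1}), kβ + (k(k−1)/2)(β² − α²) ≡ 0 (mod p^γ), and kβ + (k(k−1)/2)(β² − α²) ≢ 0 (mod p^{γ+1}). Then there exists a ∈ ℤ_p with a ≡ 1 (mod p^{γ+1}) such that 1 + Σ_{j=1}^k binom(k,j)·(aβ^j − α^j)·(a − 1)^{j−1} = 0; consequently a(1 − β + βa)^k = (1 − α + αa)^k and |a − 1|_p ≤ 1/p. -/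

import Mathlib

variable {p : ℕ} [Fact p.Prime]

lemma dvd_iff_norm_le (x : ℤ_[p]) (n : ℕ) :
    (p : ℤ_[p]) ^ n ∣ x ↔ ‖x‖ ≤ (p : ℝ) ^ (-(n : ℤ)) := by
  rw [PadicInt.norm_le_pow_iff_mem_span_pow, Ideal.mem_span_singleton]

-- binomial expansion
lemma binom_expand (k : ℕ) (hk : 1 ≤ k) (x t : ℤ_[p]) :
    (1 + x * t) ^ k =
      1 + t * ∑ i ∈ Finset.range k, ((k.choose (i+1) : ℕ) : ℤ_[p]) * x ^ (i+1) * t ^ i := by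
  obtain ⟨m, rfl⟩ : ∃ m, k = m + 1 := ⟨k - 1, by omega⟩
  rw [add_comm (1 : ℤ_[p]) (x*t), add_pow, Finset.sum_range_succ']
  simp only [pow_zero, one_pow, one_mul, Nat.choose_zero_right, Nat.cast_one, mul_one]
  rw [Finset.mul_sum, add_comm]
  have : ∀ i ∈ Finset.range (m+1),
      (x*t)^(i+1) * ((Nat.choose (m+1) (i+1) : ℕ) : ℤ_[p])
        = t * (((Nat.choose (m+1) (i+1) : ℕ) : ℤ_[p]) * x ^ (i+1) * t ^ i) := by
    intro i _
    rw [mul_pow]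
    ring
  rw [Finset.sum_congr rfl this]

lemma key_identity (k : ℕ) (hk : 1 ≤ k) (α β a : ℤ_[p]) :
    a * (1 - β + β * a) ^ k - (1 - α + α * a) ^ k =
      (a - 1) * (1 + ∑ j ∈ Finset.Icc 1 k,
        ((k.choose j : ℕ) : ℤ_[p]) * (a * β ^ j - α ^ j) * (a - 1) ^ (j - 1)) := by
  have e : ∀ x : ℤ_[p], 1 - x + x * a = 1 + x * (a - 1) := fun x => by ring
  rw [e, e, binom_expand k hk β (a-1), binom_expand k hk α (a-1)]
  have hIcc : ∑ j ∈ Finset.Icc 1 k,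
        ((k.choose j : ℕ) : ℤ_[p]) * (a * β ^ j - α ^ j) * (a - 1) ^ (j - 1)
      = ∑ i ∈ Finset.range k,
        ((k.choose (i+1) : ℕ) : ℤ_[p]) * (a * β ^ (i+1) - α ^ (i+1)) * (a - 1) ^ i := by
    rw [← Finset.Ico_add_one_right_eq_Icc, Finset.sum_Ico_eq_sum_range]
    refine Finset.sum_congr (by norm_num) fun i _ => by rw [add_comm 1 i]; simp
  rw [hIcc]
  have hsplit : ∑ i ∈ Finset.range k,
        ((k.choose (i+1) : ℕ) : ℤ_[p]) * (a * β ^ (i+1) - α ^ (i+1)) * (a - 1) ^ i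
      = a * (∑ i ∈ Finset.range k, ((k.choose (i+1) : ℕ) : ℤ_[p]) * β ^ (i+1) * (a-1) ^ i)
        - ∑ i ∈ Finset.range k, ((k.choose (i+1) : ℕ) : ℤ_[p]) * α ^ (i+1) * (a-1) ^ i := by
    rw [Finset.mul_sum, ← Finset.sum_sub_distrib]
    exact Finset.sum_congr rfl fun i _ => by ring
  rw [hsplit]
  ring

variable {p : ℕ} [Fact p.Prime]

lemma deriv_term_eval (k : ℕ) (α β : ℤ_[p]) (j : ℕ) (hj : j ∈ Finset.Icc 1 k) :
    (Polynomial.derivative (Polynomial.C ((k.choose j : ℕ) : ℤ_[p]) *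
        (Polynomial.C (β ^ j) * Polynomial.X - Polynomial.C (α ^ j)) *
        (Polynomial.X - 1) ^ (j - 1))).eval 1
      = (if j = 1 then (k : ℤ_[p]) * β else 0)
        + (if j = 2 then ((k.choose 2 : ℕ) : ℤ_[p]) * (β ^ 2 - α ^ 2) else 0) := by
  match j with
  | 0 => simp at hj
  | 1 => simp [Polynomial.derivative_mul]
  | 2 => simp [Polynomial.derivative_mul]
  | (n+3) =>
    simp [Polynomial.derivative_mul, Polynomial.derivative_pow]

lemma evalF (k : ℕ) (α β x : ℤ_[p]) :
    ((1 : Polynomial ℤ_[p]) + ∑ j ∈ Finset.Icc 1 k, Polynomial.C ((k.choose j : ℕ) : ℤ_[p]) *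
        (Polynomial.C (β ^ j) * Polynomial.X - Polynomial.C (α ^ j)) *
        (Polynomial.X - 1) ^ (j - 1)).eval x
      = 1 + ∑ j ∈ Finset.Icc 1 k,
          ((k.choose j : ℕ) : ℤ_[p]) * (x * β ^ j - α ^ j) * (x - 1) ^ (j - 1) := by
  simp only [Polynomial.eval_add, Polynomial.eval_one, Polynomial.eval_finset_sum,
    Polynomial.eval_mul, Polynomial.eval_pow, Polynomial.eval_sub, Polynomial.eval_C,
    Polynomial.eval_X, Polynomial.eval_one]
  congr 1
  exact Finset.sum_congr rfl fun j _ => by ring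

lemma evalF1 (k : ℕ) (hk : 1 ≤ k) (α β : ℤ_[p]) :
    ((1 : Polynomial ℤ_[p]) + ∑ j ∈ Finset.Icc 1 k, Polynomial.C ((k.choose j : ℕ) : ℤ_[p]) *
        (Polynomial.C (β ^ j) * Polynomial.X - Polynomial.C (α ^ j)) *
        (Polynomial.X - 1) ^ (j - 1)).eval 1
      = (k : ℤ_[p]) * (β - α) + 1 := by
  rw [evalF]
  rw [Finset.sum_eq_single 1 (fun j hj hne => by
      have : j - 1 ≠ 0 := by simp at hj; omega
      rw [sub_self, zero_pow this, mul_zero]) (fun h => by simp [hk] at h)]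
  simp
  ring

lemma derivF1 (k : ℕ) (hk : 1 ≤ k) (α β : ℤ_[p]) :
    (Polynomial.derivative ((1 : Polynomial ℤ_[p]) +
        ∑ j ∈ Finset.Icc 1 k, Polynomial.C ((k.choose j : ℕ) : ℤ_[p]) *
        (Polynomial.C (β ^ j) * Polynomial.X - Polynomial.C (α ^ j)) *
        (Polynomial.X - 1) ^ (j - 1))).eval 1
      = (k : ℤ_[p]) * β + ((k.choose 2 : ℕ) : ℤ_[p]) * (β ^ 2 - α ^ 2) := by
  rw [map_add, Polynomial.derivative_one, map_sum, Polynomial.eval_add,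
    Polynomial.eval_zero, Polynomial.eval_finset_sum, zero_add,
    Finset.sum_congr rfl (deriv_term_eval k α β), Finset.sum_add_distrib,
    Finset.sum_ite_eq' (Finset.Icc 1 k) 1 (fun _ => (k : ℤ_[p]) * β),
    Finset.sum_ite_eq' (Finset.Icc 1 k) 2
      (fun _ => ((k.choose 2 : ℕ) : ℤ_[p]) * (β ^ 2 - α ^ 2))]
  have h1 : (1 : ℕ) ∈ Finset.Icc 1 k := by simp [hk]
  rw [if_pos h1]
  by_cases h2 : (2 : ℕ) ∈ Finset.Icc 1 k
  · rw [if_pos h2]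
  · rw [if_neg h2]
    have hk1 : k = 1 := by simp at h2; omega
    subst hk1
    norm_num

/-- Theorem 5.1 (via Hensel's lemma): if `α, β ∈ ℤ_p`, `k ≥ 1`, and `γ ≥ 0` satisfy
`k(β−α)+1 ≡ 0 (mod p^{2γ+1})`, `kβ + (k(k−1)/2)(β²−α²) ≡ 0 (mod p^γ)` and
`kβ + (k(k−1)/2)(β²−α²) ≢ 0 (mod p^{γ+1})`, then there is `a ∈ ℤ_p` with
`a ≡ 1 (mod p^{γ+1})`, `G(a) = 0` (hence `a(1−β+βa)^k = (1−α+αa)^k`) and `|a−1|_p ≤ 1/p`. -/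
theorem padic_hensel_nontrivial_root
    (p : ℕ) [Fact p.Prime] (k : ℕ) (hk : 1 ≤ k) (α β : ℤ_[p]) (γ : ℕ)
    (h1 : (p : ℤ_[p]) ^ (2 * γ + 1) ∣ ((k : ℤ_[p]) * (β - α) + 1))
    (h2 : (p : ℤ_[p]) ^ γ ∣
      ((k : ℤ_[p]) * β + ((k * (k - 1) / 2 : ℕ) : ℤ_[p]) * (β ^ 2 - α ^ 2)))
    (h3 : ¬ (p : ℤ_[p]) ^ (γ + 1) ∣
      ((k : ℤ_[p]) * β + ((k * (k - 1) / 2 : ℕ) : ℤ_[p]) * (β ^ 2 - α ^ 2))) :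
    ∃ a : ℤ_[p],
      (p : ℤ_[p]) ^ (γ + 1) ∣ (a - 1) ∧
      1 + ∑ j ∈ Finset.Icc 1 k,
        ((k.choose j : ℕ) : ℤ_[p]) * (a * β ^ j - α ^ j) * (a - 1) ^ (j - 1) = 0 ∧
      a * (1 - β + β * a) ^ k = (1 - α + α * a) ^ k ∧
      ‖a - 1‖ ≤ 1 / (p : ℝ) := by
  set D : ℤ_[p] := (k : ℤ_[p]) * β + ((k * (k - 1) / 2 : ℕ) : ℤ_[p]) * (β ^ 2 - α ^ 2) with hD
  set F : Polynomial ℤ_[p] := (1 : Polynomial ℤ_[p]) +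
      ∑ j ∈ Finset.Icc 1 k, Polynomial.C ((k.choose j : ℕ) : ℤ_[p]) *
        (Polynomial.C (β ^ j) * Polynomial.X - Polynomial.C (α ^ j)) *
        (Polynomial.X - 1) ^ (j - 1) with hFdef
  have hp1 : (1 : ℝ) < p := by exact_mod_cast (Fact.out : p.Prime).one_lt
  have hp0 : (0 : ℝ) < p := lt_trans one_pos hp1
  have hF1 : F.eval 1 = (k : ℤ_[p]) * (β - α) + 1 := evalF1 k hk α β
  have hD1 : F.derivative.eval 1 = D := by
    rw [hFdef, derivF1 k hk α β, Nat.choose_two_right]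
  have hDub : ‖D‖ ≤ (p : ℝ) ^ (-(γ : ℤ)) := by
    have := (dvd_iff_norm_le D γ).1 h2
    exact this
  have hDlb : (p : ℝ) ^ (-(γ : ℤ)) ≤ ‖D‖ := by
    by_contra hcon
    push_neg at hcon
    rw [PadicInt.norm_lt_pow_iff_norm_le_pow_sub_one] at hcon
    apply h3
    rw [dvd_iff_norm_le]
    convert hcon using 2
    push_cast
    ring
  have hnorm : ‖F.eval 1‖ < ‖F.derivative.eval 1‖ ^ 2 := by
    rw [hF1, hD1]
    calc ‖(k : ℤ_[p]) * (β - α) + 1‖ ≤ (p : ℝ) ^ (-((2 * γ + 1 : ℕ) : ℤ)) :=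
          (dvd_iff_norm_le _ _).1 h1
      _ < (p : ℝ) ^ (-(2 * (γ : ℤ))) := by
          apply zpow_lt_zpow_right₀ hp1
          push_cast
          omega
      _ = ((p : ℝ) ^ (-(γ : ℤ))) ^ 2 := by
          rw [sq, ← zpow_add₀ (ne_of_gt hp0)]
          ring_nf
      _ ≤ ‖D‖ ^ 2 := pow_le_pow_left₀ (by positivity) hDlb 2
  obtain ⟨a, ha0, ha1, -, -⟩ := hensels_lemma hnorm
  have haD : ‖a - 1‖ < ‖D‖ := by rwa [Polynomial.coe_aeval_eq_eval, hD1] at ha1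
  have hadvd : (p : ℤ_[p]) ^ (γ + 1) ∣ (a - 1) := by
    rw [dvd_iff_norm_le]
    have hlt := lt_of_lt_of_le haD hDub
    rw [PadicInt.norm_lt_pow_iff_norm_le_pow_sub_one] at hlt
    convert hlt using 2
    push_cast
    ring
  have hG : 1 + ∑ j ∈ Finset.Icc 1 k,
      ((k.choose j : ℕ) : ℤ_[p]) * (a * β ^ j - α ^ j) * (a - 1) ^ (j - 1) = 0 := by
    rw [← evalF k α β a, ← hFdef, ← Polynomial.coe_aeval_eq_eval, ha0]
  refine ⟨a, hadvd, hG, ?_, ?_⟩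
  · have hki := key_identity k hk α β a
    rw [hG, mul_zero] at hki
    exact sub_eq_zero.1 hki
  · have := (dvd_iff_norm_le (a - 1) (γ + 1)).1 hadvd
    calc ‖a - 1‖ ≤ (p : ℝ) ^ (-((γ + 1 : ℕ) : ℤ)) := this
      _ ≤ (p : ℝ) ^ (-1 : ℤ) := by
          apply zpow_le_zpow_right₀ (le_of_lt hp1)
          push_cast
          omega
      _ = 1 / (p : ℝ) := by rw [zpow_neg_one, one_div]
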